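/- Let Y be the Markov chain on ℕ≥1 with transition probability P(k,k') = (k'/k) ρ^{k'−k} σ^k ∑_{i_1+⋯+i_k=k'} e^{−β∑ E_{i_j}}. Then E[Y_{n+1} | Y_n = k] = k + μ, where μ = B_2 − 1 and B_2 = ∑_{i=0}^D i² p*_i. -/

import Mathlib

open Real Finset

lemma aux_sum {n m : ℕ} (a : Fin m → ℝ) (S S2 : ℝ)
    (hS' : ∑ i, a i = S)
    (hS : ∑ i : Fin m, (i.1 : ℝ) * a i = S)
    (hS2 : ∑ i : Fin m, (i.1 : ℝ) ^ 2 * a i = S2) (j l : Fin n) :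
    ∑ f : Fin n → Fin m, (((f j).1 : ℝ) * ((f l).1 : ℝ) * ∏ t, a (f t))
      = if j = l then S2 * S ^ (n - 1) else S ^ n := by
  have key : ∀ f : Fin n → Fin m,
      ((f j).1 : ℝ) * ((f l).1 : ℝ) * ∏ t, a (f t)
      = ∏ t, ((if t = j then ((f t).1 : ℝ) else 1) *
          ((if t = l then ((f t).1 : ℝ) else 1) * a (f t))) := by
    intro f
    rw [Finset.prod_mul_distrib, Finset.prod_mul_distrib]
    rw [Finset.prod_ite_eq' Finset.univ j (fun t => (((f t).1 : ℝ))),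
        Finset.prod_ite_eq' Finset.univ l (fun t => (((f t).1 : ℝ)))]
    simp [mul_assoc]
  simp_rw [key]
  have hpu := Finset.prod_univ_sum (fun _ : Fin n => (Finset.univ : Finset (Fin m)))
    (fun t i => (if t = j then (i.1 : ℝ) else 1) * ((if t = l then (i.1 : ℝ) else 1) * a i))
  rw [Fintype.piFinset_univ] at hpu
  rw [← hpu]
  have ht : ∀ t : Fin n,
      (∑ i : Fin m, (if t = j then (i.1 : ℝ) else 1) *
        ((if t = l then (i.1 : ℝ) else 1) * a i)) = if t = j ∧ t = l then S2 else S := by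
    intro t
    by_cases h1 : t = j <;> by_cases h2 : t = l
    · rw [if_pos ⟨h1, h2⟩]; simp only [if_pos h1, if_pos h2]
      rw [← hS2]; exact Finset.sum_congr rfl fun i _ => by ring
    · rw [if_neg (by tauto)]; simp only [if_pos h1, if_neg h2]
      rw [← hS]; exact Finset.sum_congr rfl fun i _ => by ring
    · rw [if_neg (by tauto)]; simp only [if_neg h1, if_pos h2]
      rw [← hS]; exact Finset.sum_congr rfl fun i _ => by ring
    · rw [if_neg (by tauto)]; simp only [if_neg h1, if_neg h2]
      simpa using hS'
  rw [Finset.prod_congr rfl (fun t _ => ht t)]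
  by_cases hjl : j = l
  · subst hjl
    simp only [and_self, eq_self_iff_true]
    rw [← Finset.mul_prod_erase Finset.univ _ (Finset.mem_univ j)]
    rw [if_pos rfl]
    rw [Finset.prod_congr rfl (fun t htmem => if_neg (Finset.ne_of_mem_erase htmem)),
        Finset.prod_const, Finset.card_erase_of_mem (Finset.mem_univ j),
        Finset.card_univ, Fintype.card_fin]
    simp
  · rw [if_neg hjl]
    have : ∀ t : Fin n, (if t = j ∧ t = l then S2 else S) = S := by
      intro t
      apply if_neg
      rintro ⟨rfl, rfl⟩
      exact hjl rfl
    rw [Finset.prod_congr rfl (fun t _ => this t), Finset.prod_const,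
        Finset.card_univ, Fintype.card_fin]

theorem conditional_first_moment
    (D : ℕ) (hD : 2 ≤ D) (E : Fin (D + 1) → ℝ) (β : ℝ)
    (ρ C σ : ℝ) (hρ : 0 < ρ) (hC : 0 < C)
    (hC1 : 1 / C = ∑ i : Fin (D + 1), Real.exp (-β * E i) * ρ ^ (i.1 : ℕ))
    (hC2 : 1 / C = ∑ i : Fin (D + 1), (i.1 : ℝ) * Real.exp (-β * E i) * ρ ^ (i.1 : ℕ))
    (hσ : 1 / C = ρ / σ)
    (pstar : Fin (D + 1) → ℝ)
    (hp : ∀ i, pstar i = C * Real.exp (-β * E i) * ρ ^ (i.1 : ℕ))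
    (B₂ μ : ℝ)
    (hB₂ : B₂ = ∑ i : Fin (D + 1), (i.1 : ℝ) ^ 2 * pstar i)
    (hμ : μ = B₂ - 1)
    (P : ℕ → ℕ → ℝ)
    (hP : ∀ k k', P k k' = (k' : ℝ) / k * ρ ^ ((k' : ℤ) - (k : ℤ)) * σ ^ k *
      ∑ f ∈ Finset.univ.filter
          (fun f : Fin k → Fin (D + 1) => ∑ j, (f j).1 = k'),
        Real.exp (-β * ∑ j, E (f j))) :
    ∀ k : ℕ, 1 ≤ k →
      ∑ k' ∈ Finset.range (D * k + 1), (k' : ℝ) * P k k' = (k : ℝ) + μ := by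
  intro k hk
  have hρn : ρ ≠ 0 := ne_of_gt hρ
  have hCn : C ≠ 0 := ne_of_gt hC
  have hσn : σ ≠ 0 := by
    intro h
    rw [h, div_zero] at hσ
    exact one_div_ne_zero hCn hσ
  have hσval : σ = C * ρ := by
    field_simp at hσ
    linarith
  have hkR : (k : ℝ) ≠ 0 := Nat.cast_ne_zero.mpr (Nat.one_le_iff_ne_zero.mp hk)
  set a : Fin (D + 1) → ℝ := fun i => Real.exp (-β * E i) * ρ ^ (i.1 : ℕ) with ha
  have hS' : ∑ i, a i = 1 / C := hC1.symm
  have hS : ∑ i : Fin (D + 1), (i.1 : ℝ) * a i = 1 / C := by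
    rw [hC2]
    exact Finset.sum_congr rfl fun i _ => by rw [ha]; ring
  have hS2 : ∑ i : Fin (D + 1), (i.1 : ℝ) ^ 2 * a i = B₂ / C := by
    rw [eq_div_iff hCn, hB₂, Finset.sum_mul]
    exact Finset.sum_congr rfl fun i _ => by rw [hp, ha]; ring
  have h1 : ∀ k' ∈ Finset.range (D * k + 1),
      (k' : ℝ) * P k k' = ∑ f ∈ Finset.univ.filter
          (fun f : Fin k → Fin (D + 1) => ∑ j, (f j).1 = k'),
        (C ^ k / k * ((∑ j, ((f j).1 : ℝ)) ^ 2 * ∏ t, a (f t))) := by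
    intro k' _
    rw [hP, Finset.mul_sum, Finset.mul_sum]
    apply Finset.sum_congr rfl
    intro f hf
    rw [Finset.mem_filter] at hf
    have hsum : ((k' : ℕ) : ℝ) = ∑ j, ((f j).1 : ℝ) := by
      rw [← hf.2]; push_cast; ring
    have hprod : ∏ t, a (f t) = Real.exp (-β * ∑ j, E (f j)) * ρ ^ k' := by
      rw [ha]
      rw [Finset.prod_mul_distrib, Finset.prod_pow_eq_pow_sum, hf.2, ← Real.exp_sum,
        ← Finset.mul_sum]
    have hz : ρ ^ ((k' : ℤ) - (k : ℤ)) = ρ ^ k' / ρ ^ k := by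
      rw [zpow_sub₀ hρn, zpow_natCast, zpow_natCast]
    rw [hprod, hz, ← hsum, hσval, mul_pow]
    field_simp
  rw [Finset.sum_congr rfl h1]
  have hmaps : ∀ f : Fin k → Fin (D + 1), f ∈ (Finset.univ : Finset (Fin k → Fin (D + 1))) →
      (∑ j, (f j).1) ∈ Finset.range (D * k + 1) := by
    intro f _
    rw [Finset.mem_range, Nat.lt_succ_iff]
    calc ∑ j, (f j).1 ≤ ∑ _j : Fin k, D := Finset.sum_le_sum fun j _ => Nat.lt_succ_iff.mp (f j).2
    _ = k * D := by rw [Finset.sum_const, smul_eq_mul, Finset.card_univ, Fintype.card_fin]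
    _ = D * k := Nat.mul_comm k D
  rw [Finset.sum_fiberwise_of_maps_to hmaps]
  have hsq : ∀ f : Fin k → Fin (D + 1),
      C ^ k / k * ((∑ j, ((f j).1 : ℝ)) ^ 2 * ∏ t, a (f t))
      = C ^ k / k * ∑ j : Fin k, ∑ l : Fin k,
          (((f j).1 : ℝ) * ((f l).1 : ℝ) * ∏ t, a (f t)) := by
    intro f
    congr 1
    rw [sq, Finset.sum_mul_sum, Finset.sum_mul]
    apply Finset.sum_congr rfl
    intro j _
    rw [Finset.sum_mul]
  rw [Finset.sum_congr rfl fun f _ => hsq f, ← Finset.mul_sum]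
  rw [Finset.sum_comm]
  rw [Finset.sum_congr rfl fun j (_ : j ∈ Finset.univ) => Finset.sum_comm]
  rw [Finset.sum_congr rfl fun j (_ : j ∈ (Finset.univ : Finset (Fin k))) =>
    Finset.sum_congr rfl fun l _ => aux_sum a (1 / C) (B₂ / C) hS' hS hS2 j l]
  have hrow : ∀ j : Fin k,
      (∑ l : Fin k, if j = l then (B₂ / C) * (1 / C) ^ (k - 1) else (1 / C) ^ k)
      = (B₂ / C) * (1 / C) ^ (k - 1) + ((k : ℝ) - 1) * (1 / C) ^ k := by
    intro j
    have step : ∀ l : Fin k,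
        (if j = l then (B₂ / C) * (1 / C) ^ (k - 1) else (1 / C) ^ k)
        = (1 / C) ^ k + (if j = l then (B₂ / C) * (1 / C) ^ (k - 1) - (1 / C) ^ k else 0) := by
      intro l; by_cases h : j = l <;> simp [h]
    rw [Finset.sum_congr rfl fun l _ => step l, Finset.sum_add_distrib,
      Finset.sum_const, Finset.sum_ite_eq, if_pos (Finset.mem_univ j),
      Finset.card_univ, Fintype.card_fin, nsmul_eq_mul]
    ring
  rw [Finset.sum_congr rfl fun j _ => hrow j, Finset.sum_const, Finset.card_univ,
    Fintype.card_fin, nsmul_eq_mul]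
  have hCk : C ^ k = C ^ (k - 1) * C := by
    rw [← pow_succ, Nat.sub_add_cancel hk]
  have hCk' : (1 / C : ℝ) ^ k = (1 / C) ^ (k - 1) * (1 / C) := by
    rw [← pow_succ, Nat.sub_add_cancel hk]
  have hCk1 : (C : ℝ) ^ (k - 1) ≠ 0 := pow_ne_zero _ hCn
  rw [hμ, hCk', hCk]
  field_simp
  have hX : C ^ (k - 1) * C⁻¹ ^ (k - 1) = 1 := by rw [← mul_pow, mul_inv_cancel₀ hCn, one_pow]
  linear_combination (B₂ + k - 1) * hX
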